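/- Let P be a partial latin square of order n whose filled cells are exactly those of the upper-left r×s rectangle R. Let H be the set of all rn cells in the top r rows, and for each symbol σ let ν(σ) be the number of occurrences of σ in R. Then α(σ,H) = min{r, ν(σ)+n−s}. -/

import Mathlib

open scoped Classical

section PLS

variable {n : ℕ}

/-- A partial latin square of order `n`: an `n × n` array of optional symbols,
no symbol occurring twice in any row or column. -/
def IsPLS (n : ℕ) (P : Fin n → Fin n → Option (Fin n)) : Prop :=
  (∀ i j j' σ, P i j = some σ → P i j' = some σ → j = j') ∧
  (∀ i i' j σ, P i j = some σ → P i' j = some σ → i = i')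

/-- `σ` is missing from row `i`. -/
def MissingRow (P : Fin n → Fin n → Option (Fin n)) (σ i : Fin n) : Prop :=
  ∀ j, P i j ≠ some σ

/-- `σ` is missing from column `j`. -/
def MissingCol (P : Fin n → Fin n → Option (Fin n)) (σ j : Fin n) : Prop :=
  ∀ i, P i j ≠ some σ

/-- A cell supports `σ` if it contains `σ`, or is empty and `σ` is missing from
its row and column. -/
def Supports (P : Fin n → Fin n → Option (Fin n)) (σ : Fin n) (c : Fin n × Fin n) : Prop :=
  P c.1 c.2 = some σ ∨ (P c.1 c.2 = none ∧ MissingRow P σ c.1 ∧ MissingCol P σ c.2)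

/-- A set of cells is independent if no two share a row or a column. -/
def IndepCells (S : Finset (Fin n × Fin n)) : Prop :=
  ∀ c ∈ S, ∀ c' ∈ S, c ≠ c' → c.1 ≠ c'.1 ∧ c.2 ≠ c'.2

/-- `alpha P σ T` : max size of an independent subset of `T` all of whose cells support `σ`. -/
noncomputable def alpha (P : Fin n → Fin n → Option (Fin n)) (σ : Fin n)
    (T : Finset (Fin n × Fin n)) : ℕ :=
  (T.powerset.filter (fun S => IndepCells S ∧ ∀ c ∈ S, Supports P σ c)).sup Finset.card

/-- Hall's Condition: every set of cells satisfies the Hall Inequality. -/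
def HallCond (n : ℕ) (P : Fin n → Fin n → Option (Fin n)) : Prop :=
  ∀ T : Finset (Fin n × Fin n), T.card ≤ ∑ σ : Fin n, alpha P σ T

/-- A latin square of order `n`. -/
def IsLatin (n : ℕ) (L : Fin n → Fin n → Fin n) : Prop :=
  (∀ i, Function.Injective (L i)) ∧ (∀ j, Function.Injective fun i => L i j)

/-- `L` is a completion of `P`. -/
def Completes (n : ℕ) (P : Fin n → Fin n → Option (Fin n)) (L : Fin n → Fin n → Fin n) : Prop :=
  IsLatin n L ∧ ∀ i j σ, P i j = some σ → L i j = σ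

end PLS

theorem stmt6 (n r s : ℕ) (hr : 1 ≤ r) (hrn : r ≤ n) (hs : 1 ≤ s) (hsn : s ≤ n)
    (P : Fin n → Fin n → Option (Fin n)) (hP : IsPLS n P)
    (hshape : ∀ i j : Fin n, P i j ≠ none ↔ (i.val < r ∧ j.val < s))
    (H : Finset (Fin n × Fin n))
    (hH : H = Finset.univ.filter (fun c : Fin n × Fin n => c.1.val < r))
    (σ : Fin n) (ν : ℕ)
    (hν : ν = (Finset.univ.filter
      (fun c : Fin n × Fin n => P c.1 c.2 = some σ)).card) :
    alpha P σ H = min r (ν + (n - s)) := by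
  classical
  subst hH
  set A : Finset (Fin n × Fin n) :=
    Finset.univ.filter (fun c : Fin n × Fin n => P c.1 c.2 = some σ) with hA
  have hmemA : ∀ c : Fin n × Fin n, c ∈ A ↔ P c.1 c.2 = some σ := by
    intro c; simp [hA]
  -- cells of A lie in the rectangle
  have hArect : ∀ c ∈ A, c.1.val < r ∧ c.2.val < s := by
    intro c hc
    exact (hshape c.1 c.2).1 (by rw [(hmemA c).1 hc]; simp)
  -- cells with big column are empty
  have hempty : ∀ (i j : Fin n), s ≤ j.val → P i j = none := by
    intro i j hj
    by_contra h
    have := (hshape i j).1 h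
    omega
  -- row projection injective on A
  have hrowinjA : ∀ c ∈ A, ∀ c' ∈ A, c.1 = c'.1 → c = c' := by
    intro c hc c' hc' h
    have h1 := (hmemA c).1 hc
    have h2 := (hmemA c').1 hc'
    rw [← h] at h2
    exact Prod.ext h (hP.1 c.1 c.2 c'.2 σ h1 h2)
  have hcolinjA : ∀ c ∈ A, ∀ c' ∈ A, c.2 = c'.2 → c = c' := by
    intro c hc c' hc' h
    have h1 := (hmemA c).1 hc
    have h2 := (hmemA c').1 hc'
    rw [← h] at h2
    exact Prod.ext (hP.2 c.1 c'.1 c.2 σ h1 h2) h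
  -- card of small rows
  have hcardRows : (Finset.univ.filter fun i : Fin n => i.val < r).card = r := by
    rw [Finset.card_filter, Fin.sum_univ_eq_sum_range (fun i => if i < r then 1 else 0),
      ← Finset.card_filter]
    have : (Finset.range n).filter (fun i => i < r) = Finset.range r := by
      ext i; simp; omega
    rw [this, Finset.card_range]
  have hcardBigCols : (Finset.univ.filter fun j : Fin n => s ≤ j.val).card = n - s := by
    rw [Finset.card_filter, Fin.sum_univ_eq_sum_range (fun i => if s ≤ i then 1 else 0),
      ← Finset.card_filter]
    have : (Finset.range n).filter (fun i => s ≤ i) = Finset.Ico s n := by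
      ext i; simp [Finset.mem_Ico]; omega
    rw [this, Nat.card_Ico]
  -- rows of A
  have hrowsAcard : (A.image Prod.fst).card = ν := by
    rw [hν]
    exact Finset.card_image_of_injOn (fun c hc c' hc' h => hrowinjA c hc c' hc' h)
  have hrowsAsub : A.image Prod.fst ⊆ Finset.univ.filter fun i : Fin n => i.val < r := by
    intro i hi
    obtain ⟨c, hc, rfl⟩ := Finset.mem_image.1 hi
    simp [(hArect c hc).1]
  have hνr : ν ≤ r := by
    rw [← hrowsAcard, ← hcardRows]
    exact Finset.card_le_card hrowsAsub
  -- missing rows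
  have hmissrows : (Finset.univ.filter fun i : Fin n => i.val < r) \ A.image Prod.fst =
      Finset.univ.filter fun i : Fin n => i.val < r ∧ MissingRow P σ i := by
    ext i
    simp only [Finset.mem_sdiff, Finset.mem_filter, Finset.mem_univ, true_and,
      Finset.mem_image]
    simp only [MissingRow]
    constructor
    · rintro ⟨hir, hni⟩
      refine ⟨hir, fun j hj => hni ⟨(i, j), (hmemA _).2 hj, rfl⟩⟩
    · rintro ⟨hir, hm⟩
      refine ⟨hir, ?_⟩
      rintro ⟨c, hc, rfl⟩
      exact hm c.2 ((hmemA c).1 hc)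
  have hmisscard : (Finset.univ.filter fun i : Fin n => i.val < r ∧ MissingRow P σ i).card
      = r - ν := by
    rw [← hmissrows, Finset.card_sdiff_of_subset hrowsAsub, hcardRows, hrowsAcard]
  -- pick subsets for the construction
  set m := min (r - ν) (n - s) with hm
  obtain ⟨R', hR'sub, hR'card⟩ := Finset.exists_subset_card_eq (show m ≤
    (Finset.univ.filter fun i : Fin n => i.val < r ∧ MissingRow P σ i).card
    by rw [hmisscard]; omega)
  obtain ⟨C', hC'sub, hC'card⟩ := Finset.exists_subset_card_eq (show m ≤
    (Finset.univ.filter fun j : Fin n => s ≤ j.val).card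
    by rw [hcardBigCols]; omega)
  have hcardeq : R'.card = C'.card := by rw [hR'card, hC'card]
  set e := Finset.equivOfCardEq hcardeq with he
  set S₂ : Finset (Fin n × Fin n) :=
    R'.attach.image (fun x => (x.1, (e x).1)) with hS₂
  have hmemS₂ : ∀ c ∈ S₂, c.1 ∈ R' ∧ c.2 ∈ C' ∧ ∀ c' ∈ S₂, (c.1 = c'.1 ∨ c.2 = c'.2) → c = c' := by
    intro c hc
    obtain ⟨x, hx, rfl⟩ := Finset.mem_image.1 hc
    refine ⟨x.2, (e x).2, ?_⟩
    intro c' hc' hcc'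
    obtain ⟨y, hy, rfl⟩ := Finset.mem_image.1 hc'
    have hxy : x = y := by
      rcases hcc' with h | h
      · exact Subtype.ext h
      · exact e.injective (Subtype.ext h)
    rw [hxy]
  have hS₂card : S₂.card = m := by
    rw [hS₂, Finset.card_image_of_injective _ (fun x y hxy => Subtype.ext (congrArg Prod.fst hxy)),
      Finset.card_attach, hR'card]
  have hS₂rows : ∀ c ∈ S₂, c.1.val < r ∧ MissingRow P σ c.1 := by
    intro c hc
    have := hR'sub (hmemS₂ c hc).1
    simpa using this
  have hS₂cols : ∀ c ∈ S₂, s ≤ c.2.val := by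
    intro c hc
    have := hC'sub (hmemS₂ c hc).2.1
    simpa using this
  -- disjointness of A and S₂
  have hdisj : Disjoint A S₂ := by
    rw [Finset.disjoint_left]
    intro c hcA hcS₂
    exact (hS₂rows c hcS₂).2 c.2 ((hmemA c).1 hcA)
  set S : Finset (Fin n × Fin n) := A ∪ S₂ with hS
  have hScard : S.card = ν + m := by
    rw [hS, Finset.card_union_of_disjoint hdisj, hS₂card, hν, hA]
  -- S is a valid witness
  have hSmem : S ∈ ((Finset.univ.filter (fun c : Fin n × Fin n => c.1.val < r)).powerset.filter
      (fun S => IndepCells S ∧ ∀ c ∈ S, Supports P σ c)) := by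
    rw [Finset.mem_filter, Finset.mem_powerset]
    refine ⟨?_, ?_, ?_⟩
    · intro c hc
      rcases Finset.mem_union.1 hc with h | h
      · simp [(hArect c h).1]
      · simp [(hS₂rows c h).1]
    · intro c hc c' hc' hne
      constructor
      · intro h
        rcases Finset.mem_union.1 hc with h1 | h1 <;> rcases Finset.mem_union.1 hc' with h2 | h2
        · exact hne (hrowinjA c h1 c' h2 h)
        · exact (hS₂rows c' h2).2 c.2 (h ▸ (hmemA c).1 h1)
        · exact (hS₂rows c h1).2 c'.2 (h ▸ (hmemA c').1 h2)
        · exact hne ((hmemS₂ c h1).2.2 c' h2 (Or.inl h))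
      · intro h
        rcases Finset.mem_union.1 hc with h1 | h1 <;> rcases Finset.mem_union.1 hc' with h2 | h2
        · exact hne (hcolinjA c h1 c' h2 h)
        · have := (hArect c h1).2
          have := hS₂cols c' h2
          omega
        · have := (hArect c' h2).2
          have := hS₂cols c h1
          omega
        · exact hne ((hmemS₂ c h1).2.2 c' h2 (Or.inr h))
    · intro c hc
      rcases Finset.mem_union.1 hc with h | h
      · exact Or.inl ((hmemA c).1 h)
      · refine Or.inr ⟨hempty c.1 c.2 (hS₂cols c h), (hS₂rows c h).2, ?_⟩
        intro i hi
        have : P i c.2 ≠ none := by rw [hi]; simp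
        have := (hshape i c.2).1 this
        have := hS₂cols c h
        omega
  -- lower bound
  have hlow : ν + m ≤ alpha P σ (Finset.univ.filter (fun c : Fin n × Fin n => c.1.val < r)) := by
    rw [← hScard]
    exact Finset.le_sup hSmem
  -- upper bound
  have hup : alpha P σ (Finset.univ.filter (fun c : Fin n × Fin n => c.1.val < r))
      ≤ min r (ν + (n - s)) := by
    apply Finset.sup_le
    intro T hT
    rw [Finset.mem_filter, Finset.mem_powerset] at hT
    obtain ⟨hTsub, hTindep, hTsupp⟩ := hT
    refine le_min ?_ ?_
    · -- rows injective, rows all < r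
      have : T.card = (T.image Prod.fst).card := by
        rw [Finset.card_image_of_injOn]
        intro c hc c' hc' h
        by_contra hne
        exact (hTindep c hc c' hc' hne).1 h
      rw [this, ← hcardRows]
      apply Finset.card_le_card
      intro i hi
      obtain ⟨c, hc, rfl⟩ := Finset.mem_image.1 hi
      have := hTsub hc
      simp at this
      simp [this]
    · -- split on whether the cell contains σ
      have hsplit : (T ∩ A).card + (T \ A).card = T.card :=
        Finset.card_inter_add_card_sdiff T A
      have h1 : (T ∩ A).card ≤ ν := by
        rw [hν]
        exact Finset.card_le_card (Finset.inter_subset_right)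
      have h2 : (T \ A).card ≤ n - s := by
        have hcolinj : ((T \ A).image Prod.snd).card = (T \ A).card := by
          apply Finset.card_image_of_injOn
          intro c hc c' hc' h
          by_contra hne
          exact (hTindep c (Finset.mem_sdiff.1 hc).1 c' (Finset.mem_sdiff.1 hc').1 hne).2 h
        rw [← hcolinj, ← hcardBigCols]
        apply Finset.card_le_card
        intro j hj
        obtain ⟨c, hc, rfl⟩ := Finset.mem_image.1 hj
        obtain ⟨hcT, hcA⟩ := Finset.mem_sdiff.1 hc
        have hnots : ¬ P c.1 c.2 = some σ := fun h => hcA ((hmemA c).2 h)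
        rcases hTsupp c hcT with h | ⟨h, _, _⟩
        · exact absurd h hnots
        · have hir : c.1.val < r := by have := hTsub hcT; simpa using this
          have : ¬ (c.1.val < r ∧ c.2.val < s) := by
            intro hx
            exact absurd h (by simpa using (hshape c.1 c.2).2 hx)
          simp only [Finset.mem_filter, Finset.mem_univ, true_and]
          omega
      omega
  rw [hν] at hνr hlow hup ⊢
  omega
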